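/- arXiv:1412.6822 — 3 statements merged into one kernel-verified Lean document; each statement's English description precedes it below -/
import Mathlib

section
/- For every n ∈ ℕ, every factor w of η with |w| ≤ 2ⁿ⁺¹ − 1 (the length of p⁽ⁿ⁾) is a factor of the finite word p⁽ⁿ⁺³⁾ = τⁿ⁺³(a). -/
/-- The four-letter alphabet `A = {a, x, y, z}`. -/
inductive A : Type
  | a | x | y | z
  deriving DecidableEq, Repr

/-- The substitution `τ : a ↦ axa, x ↦ y, y ↦ z, z ↦ x`. -/
def tau : A → List A
  | A.a => [A.a, A.x, A.a]
  | A.x => [A.y]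
  | A.y => [A.z]
  | A.z => [A.x]

/-- The substitution `τ` extended to finite words by concatenation. -/
def tauW (w : List A) : List A := w.flatMap tau

/-- `pw n = τⁿ(a)`, a word of length `2^(n+1) - 1`. -/
def pw : ℕ → List A
  | 0 => [A.a]
  | n + 1 => tauW (pw n)

/-- The fixed point `η` of `τ`: the unique one-sided infinite word having every
`τⁿ(a)` as a prefix.  (Since `pw (n+1)` has length `2^(n+2) - 1 > n`, reading its
`n`-th letter is well defined and independent of the choice of a large enough iterate.) -/
def eta (n : ℕ) : A := (pw (n + 1)).getD n A.a

/-- `w` is a (finite) factor of `η`. -/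
def IsFactorEta (w : List A) : Prop :=
  ∃ i : ℕ, w = (List.range w.length).map (fun k => eta (i + k))

/-! ### Auxiliary machinery -/

/-- Cyclic successor `x ↦ y ↦ z ↦ x`. -/
def nxt : A → A
  | A.a => A.a
  | A.x => A.y
  | A.y => A.z
  | A.z => A.x

/-- Middle letter sequence: `cc n = τⁿ(x)`. -/
def cc : ℕ → A
  | 0 => A.x
  | n + 1 => nxt (cc n)

lemma cc_ne_a (n : ℕ) : cc n ≠ A.a := by
  induction n with
  | zero => simp [cc]
  | succ n ih => cases h : cc n <;> simp [cc, nxt, h] ; exact absurd h ih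

lemma tau_cc (n : ℕ) : tau (cc n) = [cc (n + 1)] := by
  have := cc_ne_a n
  cases h : cc n <;> simp [cc, nxt, tau, h] at this ⊢

lemma tauW_append (u v : List A) : tauW (u ++ v) = tauW u ++ tauW v :=
  List.flatMap_append (xs := u) (ys := v) (f := tau)

lemma pw_succ (n : ℕ) : pw (n + 1) = pw n ++ [cc n] ++ pw n := by
  induction n with
  | zero => rfl
  | succ n ih =>
    have h1 : tauW [cc n] = [cc (n + 1)] := by simp [tauW, tau_cc n]
    calc pw (n + 2) = tauW (pw (n + 1)) := rfl
      _ = tauW (pw n ++ [cc n] ++ pw n) := by rw [ih]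
      _ = tauW (pw n) ++ tauW [cc n] ++ tauW (pw n) := by rw [tauW_append, tauW_append]
      _ = pw (n + 1) ++ [cc (n + 1)] ++ pw (n + 1) := by
          rw [h1, show tauW (pw n) = pw (n + 1) from rfl]

lemma pw_length (n : ℕ) : (pw n).length = 2 ^ (n + 1) - 1 := by
  induction n with
  | zero => rfl
  | succ n ih =>
    rw [pw_succ]
    have : (1:ℕ) ≤ 2 ^ (n + 1) := Nat.one_le_two_pow
    simp [ih, pow_succ]
    omega

lemma pw_step_prefix (k : ℕ) : pw k <+: pw (k + 1) := by
  rw [pw_succ, List.append_assoc]; exact List.prefix_append _ _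

lemma pw_step_suffix (k : ℕ) : pw k <:+ pw (k + 1) := by
  rw [pw_succ]; exact List.suffix_append _ _

lemma pw_prefix_le {m m' : ℕ} (h : m ≤ m') : pw m <+: pw m' := by
  induction m', h using Nat.le_induction with
  | base => exact List.prefix_rfl
  | succ k hk ih => exact ih.trans (pw_step_prefix k)

lemma pw_suffix_le {m m' : ℕ} (h : m ≤ m') : pw m <:+ pw m' := by
  induction m', h using Nat.le_induction with
  | base => exact List.suffix_rfl
  | succ k hk ih => exact ih.trans (pw_step_suffix k)

/-- Infix via drop/take at a position. -/
lemma infix_iff_drop_take {w l : List A} :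
    w <:+: l ↔ ∃ i, i + w.length ≤ l.length ∧ w = (l.drop i).take w.length := by
  constructor
  · rintro ⟨s, t, rfl⟩
    refine ⟨s.length, by simp, ?_⟩
    rw [List.append_assoc, List.drop_left, List.take_left]
  · rintro ⟨i, hil, hw⟩
    refine ⟨l.take i, (l.drop i).drop w.length, ?_⟩
    conv_rhs => rw [← List.take_append_drop i l,
      ← List.take_append_drop w.length (l.drop i)]
    rw [← hw, List.append_assoc]

/-- Any drop/take window is an infix. -/
lemma window_infix (l : List A) (i L : ℕ) : (l.drop i).take L <:+: l := by
  refine ⟨l.take i, (l.drop i).drop L, ?_⟩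
  conv_rhs => rw [← List.take_append_drop i l, ← List.take_append_drop L (l.drop i)]
  rw [List.append_assoc]

/-- If `p` is a prefix of `X` and the window fits inside `p`, the window in `X`
equals the window in `p`. -/
lemma window_of_prefix {X p : List A} (h : p <+: X) {j L : ℕ} (hjL : j + L ≤ p.length) :
    (X.drop j).take L = (p.drop j).take L := by
  obtain ⟨r, rfl⟩ := h
  rw [List.drop_append_of_le_length (by omega), List.take_append_of_le_length (by simp; omega)]

/-- The key combinatorial fact: `pw n · s · pw n` occurs in `pw (n+3)` for every
letter `s ≠ a`. -/
lemma mid_infix (n : ℕ) (s : A) (hs : s ≠ A.a) :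
    pw n ++ [s] ++ pw n <:+: pw (n + 3) := by
  have e : pw (n + 3) =
      pw n ++ [cc n] ++ pw n ++ [cc (n+1)] ++ (pw n ++ [cc n] ++ pw n) ++ [cc (n+2)]
        ++ (pw n ++ [cc n] ++ pw n ++ [cc (n+1)] ++ (pw n ++ [cc n] ++ pw n)) := by
    rw [show n + 3 = (n+2) + 1 from rfl, pw_succ (n+2), pw_succ (n+1), pw_succ n]
  have h0 := cc_ne_a n
  have hmem : s = cc n ∨ s = cc (n+1) ∨ s = cc (n+2) := by
    cases h : cc n <;> simp [cc, nxt, h] at h0 ⊢ <;> cases s <;> simp_all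
  rcases hmem with rfl | rfl | rfl
  · refine ⟨[], [cc (n+1)] ++ (pw n ++ [cc n] ++ pw n) ++ [cc (n+2)]
        ++ (pw n ++ [cc n] ++ pw n ++ [cc (n+1)] ++ (pw n ++ [cc n] ++ pw n)), ?_⟩
    rw [e]; simp [List.append_assoc]
  · refine ⟨pw n ++ [cc n], [cc n] ++ pw n ++ [cc (n+2)]
        ++ (pw n ++ [cc n] ++ pw n ++ [cc (n+1)] ++ (pw n ++ [cc n] ++ pw n)), ?_⟩
    rw [e]; simp [List.append_assoc]
  · refine ⟨pw n ++ [cc n] ++ pw n ++ [cc (n+1)] ++ (pw n ++ [cc n]),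
        [cc n] ++ pw n ++ [cc (n+1)] ++ (pw n ++ [cc n] ++ pw n), ?_⟩
    rw [e]; simp [List.append_assoc]

/-- Main induction: a factor of any `pw m` of length at most `2^(n+1)-1` is a
factor of `pw (n+3)`. -/
lemma key (n : ℕ) : ∀ m (w : List A), w <:+: pw m → w.length ≤ 2 ^ (n + 1) - 1 →
    w <:+: pw (n + 3) := by
  intro m
  induction m with
  | zero => exact fun w h _ => h.trans (pw_prefix_le (Nat.zero_le _)).isInfix
  | succ m ih =>
    intro w h hl
    rcases le_or_gt (m + 1) (n + 3) with hm | hm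
    · exact h.trans (pw_prefix_le hm).isInfix
    -- m ≥ n + 3
    have hnm : n ≤ m := by omega
    rw [pw_succ] at h
    rw [infix_iff_drop_take] at h
    obtain ⟨i, hil, hw⟩ := h
    set L := w.length with hL
    set N := (pw m).length with hN
    have hlen : (pw m ++ [cc m] ++ pw m).length = N + 1 + N := by simp; omega
    rw [hlen] at hil
    have hLn : L ≤ (pw n).length := by rw [pw_length]; exact hl
    have hnN : (pw n).length ≤ N := (pw_prefix_le hnm).length_le
    rcases le_or_gt (i + L) N with hc | hc
    · -- inside first copy
      refine ih w ?_ hl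
      have hw' : w = ((pw m).drop i).take L := by
        rw [hw, window_of_prefix (p := pw m)
          (by rw [List.append_assoc]; exact List.prefix_append _ _) hc]
      rw [hw']
      exact window_infix _ _ _
    rcases le_or_gt (N + 1) i with hc2 | hc2
    · -- inside second copy
      refine ih w ?_ hl
      have hi : i = (pw m ++ [cc m]).length + (i - (N + 1)) := by simp; omega
      have hX : (pw m ++ [cc m] ++ pw m).drop i = (pw m).drop (i - (N + 1)) := by
        conv_lhs => rw [hi]
        rw [List.drop_length_add_append]
      have hw' : w = ((pw m).drop (i - (N + 1))).take L := by rw [hw, hX]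
      rw [hw']
      exact window_infix _ _ _
    · -- straddles the middle letter
      rcases Nat.eq_zero_or_pos L with hL0 | hL0
      · have : w = [] := List.length_eq_zero_iff.mp hL0
        rw [this]; exact List.nil_infix
      set d := N - (L - 1) with hd
      have hdi : d ≤ i := by omega
      have hdN : d ≤ N := by omega
      set v := (pw m).drop d ++ [cc m] ++ (pw m).take (L - 1) with hv
      have hvlen : v.length = (L - 1) + 1 + (L - 1) := by
        simp [hv]; omega
      have hwv : w = (v.drop (i - d)).take L := by
        have h1 : (pw m ++ [cc m] ++ pw m).drop d = (pw m).drop d ++ [cc m] ++ pw m := by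
          rw [List.append_assoc, List.drop_append_of_le_length hdN, List.append_assoc]
        have h2 : (pw m ++ [cc m] ++ pw m).drop i
            = ((pw m).drop d ++ [cc m] ++ pw m).drop (i - d) := by
          rw [← h1, List.drop_drop, Nat.add_sub_cancel' hdi]
          
        rw [hw, h2]
        have hp : v <+: (pw m).drop d ++ [cc m] ++ pw m := by
          rw [hv, List.append_assoc, List.append_assoc]
          exact (List.prefix_append_right_inj _).mpr
            ((List.prefix_append_right_inj _).mpr (List.take_prefix _ _))
        exact window_of_prefix (j := i - d) (L := L) hp (by rw [hvlen]; omega)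
      have hwv' : w <:+: v := by
        rw [infix_iff_drop_take]
        exact ⟨i - d, by rw [hvlen]; omega, hwv⟩
      have hsfx : (pw m).drop d <:+ pw n := by
        obtain ⟨r, hr⟩ := pw_suffix_le hnm
        have hrlen : r.length = N - (pw n).length := by
          have := congrArg List.length hr
          simp at this; omega
        have hdr : d = r.length + (d - r.length) := by omega
        rw [← hr, hdr, List.drop_length_add_append]
        exact List.drop_suffix _ _
      have hpfx : (pw m).take (L - 1) <+: pw n := by
        obtain ⟨q, hq⟩ := pw_prefix_le hnm
        rw [← hq, List.take_append_of_le_length (by omega)]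
        exact List.take_prefix _ _
      have hvmid : v <:+: pw n ++ [cc m] ++ pw n := by
        obtain ⟨q1, hq1⟩ := hsfx
        obtain ⟨q2, hq2⟩ := hpfx
        refine ⟨q1, q2, ?_⟩
        calc q1 ++ v ++ q2
            = (q1 ++ (pw m).drop d) ++ [cc m] ++ ((pw m).take (L - 1) ++ q2) := by
              simp [hv, List.append_assoc]
          _ = pw n ++ [cc m] ++ pw n := by rw [hq1, hq2]
      exact hwv'.trans (hvmid.trans (mid_infix n (cc m) (cc_ne_a m)))

/-- A factor of `η` is a factor of some `pw m`. -/
lemma factor_infix_pw {w : List A} (hw : IsFactorEta w) :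
    ∃ m, w <:+: pw m := by
  obtain ⟨i, hw⟩ := hw
  set L := w.length with hL
  refine ⟨i + L, ?_⟩
  have hlen : i + L ≤ (pw (i + L)).length := by
    rw [pw_length]
    have := Nat.lt_two_pow_self (n := i + L)
    have h2 : 2 ^ (i + L) ≤ 2 ^ (i + L + 1) := Nat.pow_le_pow_right (by norm_num) (by omega)
    omega
  rw [infix_iff_drop_take]
  refine ⟨i, hlen, ?_⟩
  have heta : ∀ j (hj : j < (pw (i + L)).length), eta j = (pw (i + L))[j] := by
    intro j hj
    have hj1 : j < (pw (j + 1)).length := by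
      rw [pw_length]
      have := Nat.lt_two_pow_self (n := j + 1)
      have h2 : 2 ^ (j + 1) ≤ 2 ^ (j + 2) := Nat.pow_le_pow_right (by norm_num) (by omega)
      omega
    rw [eta, List.getD_eq_getElem _ _ hj1]
    rcases le_or_gt (j + 1) (i + L) with h | h
    · exact (pw_prefix_le h).getElem hj1
    · exact ((pw_prefix_le (by omega : i + L ≤ j + 1)).getElem hj).symm
  apply List.ext_getElem
  · simp; omega
  · intro k hk1 hk2
    have hkL : k < L := hk1
    rw [List.getElem_of_eq hw hk1]
    simp only [List.getElem_map, List.getElem_range, List.getElem_take, List.getElem_drop]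
    exact heta (i + k) (by omega)

/-- Every factor of `η` of length at most `|p⁽ⁿ⁾| = 2^(n+1) - 1` is a factor of the
finite word `p⁽ⁿ⁺³⁾ = τ^(n+3)(a)`. -/
theorem factor_appears_in_p_n_plus_three (n : ℕ) (w : List A)
    (hw : IsFactorEta w) (hl : w.length ≤ 2 ^ (n + 1) - 1) :
    w <:+: pw (n + 3) := by
  obtain ⟨m, hm⟩ := factor_infix_pw hw
  exact key n m w hm hl
end

section
/- (a) For every L ≥ 1, the complexity of η satisfies ℂ(L+1) − ℂ(L) ≥ 2. (b) For every n ≥ 2 and every L with 2ⁿ ≤ L ≤ 2ⁿ + 2ⁿ⁻¹ − 1, one has ℂ(L+1) − ℂ(L) ≥ 3. -/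
/-- The complexity function of `η`: the number of distinct factors of `η` of length `L`. -/
noncomputable def etaComplexity (L : ℕ) : ℕ :=
  {w : List A | w.length = L ∧ IsFactorEta w}.ncard

/-! ### auxiliary combinatorics -/

instance : Fintype A := ⟨{A.a, A.x, A.y, A.z}, fun c => by cases c <;> simp⟩

/-- the single-letter action of `τ` on non-`a` letters (cycles `x → y → z → x`). -/
def sgm : A → A
  | A.a => A.a
  | A.x => A.y
  | A.y => A.z
  | A.z => A.x

lemma sgm_inj : Function.Injective sgm := by decide

/-- interleave with `a`'s: `J [c₁,…,cₘ] = c₁ a c₂ a … cₘ a`. -/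
def J (u : List A) : List A := u.flatMap (fun d => [d, A.a])

/-- doubling map on `b`-words: `Iw [c₁,…,cₘ] = σc₁ x σc₂ x … σcₘ x`. -/
def Iw (u : List A) : List A := u.flatMap (fun d => [sgm d, A.x])

/-- levels of the odd-position subsequence of `pw`. -/
def B : ℕ → List A
  | 0 => []
  | n + 1 => A.x :: Iw (B n)

@[simp] lemma J_nil : J [] = [] := rfl
@[simp] lemma J_cons (c : A) (u : List A) : J (c :: u) = c :: A.a :: J u := rfl
@[simp] lemma J_append (u v : List A) : J (u ++ v) = J u ++ J v := by
  simp [J, List.flatMap_append]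
@[simp] lemma Iw_nil : Iw [] = [] := rfl
@[simp] lemma Iw_cons (c : A) (u : List A) : Iw (c :: u) = sgm c :: A.x :: Iw u := rfl
@[simp] lemma Iw_append (u v : List A) : Iw (u ++ v) = Iw u ++ Iw v := by
  simp [Iw, List.flatMap_append]
@[simp] lemma J_length (u : List A) : (J u).length = 2 * u.length := by
  induction u with
  | nil => rfl
  | cons c u ih => simp [ih]; ring
@[simp] lemma Iw_length (u : List A) : (Iw u).length = 2 * u.length := by
  induction u with
  | nil => rfl
  | cons c u ih => simp [ih]; ring

lemma tauW_cons (c : A) (l : List A) : tauW (c :: l) = tau c ++ tauW l := rfl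

lemma tau_ne_a {c : A} (h : c ≠ A.a) : tau c = [sgm c] := by
  cases c <;> simp_all [tau, sgm]

lemma sgm_ne_a {c : A} (h : c ≠ A.a) : sgm c ≠ A.a := by
  cases c <;> simp_all [sgm]

lemma Iw_ne_a {u : List A} (h : ∀ d ∈ u, d ≠ A.a) : ∀ d ∈ Iw u, d ≠ A.a := by
  induction u with
  | nil => simp
  | cons c u ih =>
    intro d hd
    simp only [Iw_cons, List.mem_cons] at hd
    rcases hd with rfl | rfl | hd
    · exact sgm_ne_a (h c (by simp))
    · simp
    · exact ih (fun e he => h e (by simp [he])) d hd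

lemma B_ne_a (n : ℕ) : ∀ d ∈ B n, d ≠ A.a := by
  induction n with
  | zero => simp [B]
  | succ n ih =>
    intro d hd
    simp only [B, List.mem_cons] at hd
    rcases hd with rfl | hd
    · simp
    · exact Iw_ne_a ih d hd

lemma tauW_J {u : List A} (h : ∀ d ∈ u, d ≠ A.a) : tauW (J u) = J (Iw u) := by
  induction u with
  | nil => rfl
  | cons c u ih =>
    have hc : tau c = [sgm c] := tau_ne_a (h c (by simp))
    simp only [J_cons, tauW_cons, Iw_cons, hc]
    rw [ih (fun e he => h e (by simp [he]))]
    rfl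

lemma pw_eq (n : ℕ) : pw n = A.a :: J (B n) := by
  induction n with
  | zero => rfl
  | succ n ih =>
    show tauW (pw n) = _
    rw [ih, tauW_cons, tauW_J (B_ne_a n)]
    rfl

@[simp] lemma B_length (n : ℕ) : (B n).length = 2 ^ n - 1 := by
  induction n with
  | zero => rfl
  | succ n ih =>
    show (A.x :: Iw (B n)).length = _
    have : 1 ≤ 2 ^ n := Nat.one_le_two_pow
    simp [ih, pow_succ]
    omega

/-! getD lemmas -/

lemma J_getD_even (u : List A) (t : ℕ) : (J u).getD (2 * t) A.a = u.getD t A.a := by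
  induction u generalizing t with
  | nil => rfl
  | cons c u ih =>
    cases t with
    | zero => rfl
    | succ t =>
      have : 2 * (t + 1) = (2 * t) + 1 + 1 := by ring
      rw [this]
      simp only [J_cons, List.getD_cons_succ]
      exact ih t

lemma J_getD_odd (u : List A) (t : ℕ) : (J u).getD (2 * t + 1) A.a = A.a := by
  induction u generalizing t with
  | nil => rfl
  | cons c u ih =>
    cases t with
    | zero => rfl
    | succ t =>
      have : 2 * (t + 1) + 1 = (2 * t + 1) + 1 + 1 := by ring
      rw [this]
      simp only [J_cons, List.getD_cons_succ]
      exact ih t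

lemma Iw_getD_even (u : List A) (t : ℕ) : (Iw u).getD (2 * t) A.a = sgm (u.getD t A.a) := by
  induction u generalizing t with
  | nil => rfl
  | cons c u ih =>
    cases t with
    | zero => rfl
    | succ t =>
      have : 2 * (t + 1) = (2 * t) + 1 + 1 := by ring
      rw [this]
      simp only [Iw_cons, List.getD_cons_succ]
      exact ih t

lemma Iw_getD_odd (u : List A) (t : ℕ) (h : 2 * t + 1 < 2 * u.length) :
    (Iw u).getD (2 * t + 1) A.a = A.x := by
  induction u generalizing t with
  | nil => simp at h
  | cons c u ih =>
    cases t with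
    | zero => rfl
    | succ t =>
      have e : 2 * (t + 1) + 1 = (2 * t + 1) + 1 + 1 := by ring
      rw [e]
      simp only [Iw_cons, List.getD_cons_succ]
      exact ih t (by simp at h ⊢; omega)

/-! ### the sequence `b` -/

/-- the odd-indexed subsequence of `η`. -/
def bseq (k : ℕ) : A := eta (2 * k + 1)

lemma eta_eq_B (n : ℕ) : eta n = (A.a :: J (B (n + 1))).getD n A.a := by
  unfold eta; rw [pw_eq]

lemma eta_even (k : ℕ) : eta (2 * k) = A.a := by
  rw [eta_eq_B]
  cases k with
  | zero => rfl
  | succ k =>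
    have : 2 * (k + 1) = (2 * k + 1) + 1 := by ring
    rw [this, List.getD_cons_succ, J_getD_odd]

lemma bseq_eq (k : ℕ) : bseq k = (B (2 * k + 2)).getD k A.a := by
  unfold bseq
  rw [eta_eq_B, List.getD_cons_succ, J_getD_even]

/-- prefix chain of the `B` levels -/
lemma Iw_prefix {u v : List A} (h : u <+: v) : Iw u <+: Iw v := by
  obtain ⟨t, rfl⟩ := h
  exact ⟨Iw t, (Iw_append u t).symm⟩

lemma B_prefix_succ (n : ℕ) : B n <+: B (n + 1) := by
  induction n with
  | zero => exact ⟨_, rfl⟩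
  | succ n ih =>
    show A.x :: Iw (B n) <+: A.x :: Iw (B (n+1))
    obtain ⟨t, ht⟩ := Iw_prefix ih
    exact ⟨t, by rw [List.cons_append, ht]⟩

lemma B_prefix {n m : ℕ} (h : n ≤ m) : B n <+: B m := by
  induction m with
  | zero => simpa [Nat.le_zero.mp h]
  | succ m ih =>
    rcases Nat.lt_or_ge n (m+1) with h' | h'
    · exact (ih (by omega)).trans (B_prefix_succ m)
    · have : n = m + 1 := by omega
      simp [this]

lemma getD_prefix {l l' : List A} (h : l <+: l') {k : ℕ} (hk : k < l.length) :
    l'.getD k A.a = l.getD k A.a := by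
  obtain ⟨t, rfl⟩ := h
  exact List.getD_append l t A.a k hk

lemma lt_B_length {k n : ℕ} (h : k + 2 ≤ 2 ^ n) : k < (B n).length := by
  rw [B_length]; omega

lemma two_pow_big (k : ℕ) : k + 2 ≤ 2 ^ (k + 1) := by
  induction k with
  | zero => simp
  | succ k ih =>
    have : 2 ^ (k+1) ≤ 2 ^ (k+2) := Nat.pow_le_pow_right (by norm_num) (by omega)
    omega

/-- evaluate `bseq` at any sufficiently deep level -/
lemma bseq_eq_B {n k : ℕ} (hk : k < (B n).length) : bseq k = (B n).getD k A.a := by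
  rw [bseq_eq]
  rcases Nat.le_total n (2 * k + 2) with h | h
  · exact getD_prefix (B_prefix h) hk
  · have hk2 : k < (B (2 * k + 2)).length := by
      apply lt_B_length
      calc k + 2 ≤ 2 ^ (k + 1) := two_pow_big k
        _ ≤ 2 ^ (2 * k + 2) := Nat.pow_le_pow_right (by norm_num) (by omega)
    exact (getD_prefix (B_prefix h) hk2).symm

lemma bseq_even (t : ℕ) : bseq (2 * t) = A.x := by
  have hlen : 2 * t < (B (2 * t + 3)).length := by
    apply lt_B_length
    calc 2 * t + 2 ≤ 2 ^ (2 * t + 1) := two_pow_big (2 * t)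
      _ ≤ 2 ^ (2 * t + 3) := Nat.pow_le_pow_right (by norm_num) (by omega)
  rw [bseq_eq_B hlen]
  show (A.x :: Iw (B (2 * t + 2))).getD (2 * t) A.a = A.x
  cases t with
  | zero => rfl
  | succ t =>
    have e : 2 * (t + 1) = (2 * t + 1) + 1 := by ring
    rw [e, List.getD_cons_succ, Iw_getD_odd]
    rw [B_length]
    have h1 : 2 * t + 4 ≤ 2 ^ (2 * t + 1 + 1 + 2) := by
      calc 2 * t + 4 ≤ 2 ^ (2 * t + 3) := two_pow_big (2*t+2)
        _ ≤ 2 ^ (2 * t + 1 + 1 + 2) := Nat.pow_le_pow_right (by norm_num) (by omega)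
    omega

lemma bseq_odd (t : ℕ) : bseq (2 * t + 1) = sgm (bseq t) := by
  have hlen : 2 * t + 1 < (B (2 * t + 3)).length := by
    apply lt_B_length
    calc 2 * t + 3 ≤ 2 ^ (2 * t + 2) := two_pow_big (2 * t + 1)
      _ ≤ 2 ^ (2 * t + 3) := Nat.pow_le_pow_right (by norm_num) (by omega)
  rw [bseq_eq_B hlen]
  show (A.x :: Iw (B (2 * t + 2))).getD (2 * t + 1) A.a = _
  rw [List.getD_cons_succ, Iw_getD_even]
  congr 1
  refine (bseq_eq_B ?_).symm
  apply lt_B_length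
  calc t + 2 ≤ 2 ^ (t + 1) := two_pow_big t
    _ ≤ 2 ^ (2 * t + 2) := Nat.pow_le_pow_right (by norm_num) (by omega)
/-! ### occurrences in `b` -/

/-- `w` occurs in the sequence `bseq` at position `i`. -/
def occB (w : List A) (i : ℕ) : Prop := ∀ k, k < w.length → w.getD k A.a = bseq (i + k)

lemma getD_append_right' (l l' : List A) (k : ℕ) (h : l.length ≤ k) :
    (l ++ l').getD k A.a = l'.getD (k - l.length) A.a := by
  rcases Nat.lt_or_ge k (l ++ l').length with h2 | h2
  · have hb : k - l.length < l'.length := by simp at h2; omega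
    rw [List.getD_eq_getElem _ _ h2, List.getElem_append_right h,
      List.getD_eq_getElem _ _ hb]
  · rw [List.getD_eq_default _ _ h2, List.getD_eq_default]
    simp at h2 ⊢; omega

/-- The doubling lemma: an occurrence of `u·c` yields occurrences of
`(Iw u)·σc` and of `x·(Iw u)·σc`. -/
lemma occB_double {u : List A} {c : A} {i : ℕ} (h : occB (u ++ [c]) i) :
    occB (Iw u ++ [sgm c]) (2 * i + 1) ∧ occB (A.x :: (Iw u ++ [sgm c])) (2 * i) := by
  set m := u.length with hm
  have hlen : (u ++ [c]).length = m + 1 := by simp [hm]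
  have hval : ∀ t, t ≤ m → (u ++ [c]).getD t A.a = bseq (i + t) := fun t ht =>
    h t (by omega)
  have key : occB (Iw u ++ [sgm c]) (2 * i + 1) := by
    intro k hk
    have hk' : k < 2 * m + 1 := by simpa [Iw_length] using hk
    rcases Nat.even_or_odd k with ⟨t, rfl⟩ | ⟨t, rfl⟩
    · -- k = 2t, t ≤ m
      have ht : t ≤ m := by omega
      have : (Iw u ++ [sgm c]).getD (t + t) A.a = sgm ((u ++ [c]).getD t A.a) := by
        rcases Nat.lt_or_ge t m with h1 | h1
        · rw [List.getD_append _ _ _ _ (by simp [Iw_length]; omega),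
            show t + t = 2 * t by ring, Iw_getD_even]
          congr 1
          rw [List.getD_append _ _ _ _ (by omega)]
        · have h1 : t = m := by omega
          subst h1
          rw [getD_append_right' _ _ _ (by simp [Iw_length]; omega)]
          rw [getD_append_right' _ _ _ (by omega)]
          have ea : m + m - (Iw u).length = 0 := by simp [Iw_length]; omega
          have eb : m - u.length = 0 := by omega
          rw [ea, eb]
          rfl
      rw [this, hval t ht]
      have : 2 * i + 1 + (t + t) = 2 * (i + t) + 1 := by ring
      rw [this, bseq_odd]
    · -- k = 2t+1 : letter x, position even
      have ht : t < m := by omega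
      rw [List.getD_append _ _ _ _ (by simp [Iw_length]; omega),
        Iw_getD_odd _ _ (by simp [Iw_length] at *; omega)]
      have : 2 * i + 1 + (2 * t + 1) = 2 * (i + t + 1) := by ring
      rw [this, bseq_even]
  refine ⟨key, ?_⟩
  intro k hk
  cases k with
  | zero =>
    have : 2 * i + 0 = 2 * i := by ring
    rw [this, bseq_even]; rfl
  | succ k =>
    rw [List.getD_cons_succ]
    have : 2 * i + (k + 1) = 2 * i + 1 + k := by ring
    rw [this]
    exact key k (by simpa using hk)

/-! ### the main special branch : reversed prefixes of `b` -/

def R (m : ℕ) : List A := ((List.range m).map bseq).reverse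

@[simp] lemma R_length (m : ℕ) : (R m).length = m := by simp [R]

lemma R_succ (m : ℕ) : R (m + 1) = bseq m :: R m := by
  simp [R, List.range_succ]

@[simp] lemma R_zero : R 0 = [] := rfl

lemma R_double (m : ℕ) : R (2 * m) = Iw (R m) := by
  induction m with
  | zero => rfl
  | succ m ih =>
    have e : 2 * (m + 1) = (2 * m + 1) + 1 := by ring
    rw [e, R_succ, R_succ, show 2 * m + 1 = 2 * m + 1 from rfl, bseq_odd, bseq_even, ih,
      R_succ, Iw_cons]

lemma R_double' (m : ℕ) : R (2 * m + 1) = A.x :: Iw (R m) := by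
  rw [R_succ, bseq_even, R_double]

lemma sgm_surj_ne_a {c : A} (h : c ≠ A.a) : ∃ d, d ≠ A.a ∧ sgm d = c := by
  cases c
  · exact absurd rfl h
  · exact ⟨A.z, by simp, rfl⟩
  · exact ⟨A.x, by simp, rfl⟩
  · exact ⟨A.y, by simp, rfl⟩

/-- small values of `bseq` -/
lemma bseq0 : bseq 0 = A.x := bseq_even 0
lemma bseq1 : bseq 1 = A.y := by rw [show (1:ℕ) = 2*0+1 from rfl, bseq_odd, bseq0]; rfl
lemma bseq2 : bseq 2 = A.x := bseq_even 1
lemma bseq3 : bseq 3 = A.z := by rw [show (3:ℕ) = 2*1+1 from rfl, bseq_odd, bseq1]; rfl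
lemma bseq4 : bseq 4 = A.x := bseq_even 2
lemma bseq5 : bseq 5 = A.y := by rw [show (5:ℕ) = 2*2+1 from rfl, bseq_odd, bseq2]; rfl
lemma bseq6 : bseq 6 = A.x := bseq_even 3
lemma bseq7 : bseq 7 = A.x := by rw [show (7:ℕ) = 2*3+1 from rfl, bseq_odd, bseq3]; rfl
lemma bseq8 : bseq 8 = A.x := bseq_even 4
lemma bseq9 : bseq 9 = A.y := by rw [show (9:ℕ) = 2*4+1 from rfl, bseq_odd, bseq4]; rfl

/-- The main branch: every reversed prefix of `b` is right special with all three
extensions. -/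
lemma claimM : ∀ m : ℕ, ∀ c : A, c ≠ A.a → ∃ i, occB (R m ++ [c]) i := by
  intro m
  induction m using Nat.strong_induction_on with
  | _ m ih =>
    intro c hc
    rcases Nat.eq_zero_or_pos m with rfl | hm
    · -- base : single letters
      have : ∀ i, bseq i = c → ∃ i, occB (R 0 ++ [c]) i := by
        intro i hi
        refine ⟨i, fun k hk => ?_⟩
        simp at hk
        subst hk
        simpa using hi.symm
      cases c
      · exact absurd rfl hc
      · exact this 0 bseq0
      · exact this 1 bseq1
      · exact this 3 bseq3
    · obtain ⟨d, hd, hdc⟩ := sgm_surj_ne_a hc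
      rcases Nat.even_or_odd m with ⟨m', rfl⟩ | ⟨m', rfl⟩
      · obtain ⟨i, hi⟩ := ih m' (by omega) d hd
        obtain ⟨h1, _⟩ := occB_double hi
        exact ⟨2 * i + 1, by rw [show m' + m' = 2 * m' by ring, R_double, hdc] at *; exact h1⟩
      · obtain ⟨i, hi⟩ := ih m' (by omega) d hd
        obtain ⟨_, h2⟩ := occB_double hi
        rw [hdc] at h2
        refine ⟨2 * i, ?_⟩
        rw [R_double']
        simpa using h2

/-! ### injectivity of the doubling / interleaving -/

lemma Iw_injective : Function.Injective Iw := by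
  intro u v h
  induction u generalizing v with
  | nil => cases v with
    | nil => rfl
    | cons c v => simp [Iw] at h
  | cons c u ih =>
    cases v with
    | nil => simp [Iw] at h
    | cons d v =>
      simp only [Iw_cons, List.cons.injEq] at h
      obtain ⟨h1, _, h3⟩ := h
      rw [sgm_inj h1, ih h3]

lemma J_injective : Function.Injective J := by
  intro u v h
  induction u generalizing v with
  | nil => cases v with
    | nil => rfl
    | cons c v => simp [J] at h
  | cons c u ih =>
    cases v with
    | nil => simp [J] at h
    | cons d v =>
      simp only [J_cons, List.cons.injEq] at h
      obtain ⟨h1, _, h3⟩ := h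
      rw [h1, ih h3]

/-! ### the secondary special branch -/

lemma secondary : ∀ j : ℕ, 1 ≤ j → ∀ m : ℕ, 2 ^ j ≤ m → m ≤ 2 ^ j + 2 ^ (j - 1) - 1 →
    ∃ (w : List A) (c c' : A), w.length = m ∧ w ≠ R m ∧ c ≠ c' ∧
      (∃ i, occB (w ++ [c]) i) ∧ (∃ i, occB (w ++ [c']) i) := by
  intro j hj
  induction j with
  | zero => omega
  | succ j ih =>
    intro m hmlo hmhi
    rcases Nat.eq_zero_or_pos j with rfl | hjpos
    · -- base case j = 1, m = 2
      have hm : m = 2 := by norm_num at hmlo hmhi; omega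
      subst hm
      refine ⟨[A.x, A.x], A.x, A.y, rfl, ?_, by simp, ⟨6, ?_⟩, ⟨7, ?_⟩⟩
      · rw [show (2:ℕ) = 1 + 1 from rfl, R_succ, R_succ, bseq0, bseq1]
        simp
      · intro k hk
        simp at hk
        interval_cases k
        · simpa using bseq6.symm
        · simpa using bseq7.symm
        · simpa using bseq8.symm
      · intro k hk
        simp at hk
        interval_cases k
        · simpa using bseq7.symm
        · simpa using bseq8.symm
        · simpa using bseq9.symm
    · -- inductive step
      have hP : 1 ≤ 2 ^ (j - 1) := Nat.one_le_two_pow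
      have e1 : 2 ^ (j + 1) = 2 * 2 ^ j := by rw [pow_succ]; ring
      have e2 : 2 ^ j = 2 * 2 ^ (j - 1) := by
        rw [← pow_succ']
        congr 1
        omega
      have e3 : j + 1 - 1 = j := rfl
      rw [e3] at hmhi
      rcases Nat.even_or_odd m with ⟨m', rfl⟩ | ⟨m', rfl⟩
      · have hb1 : 2 ^ j ≤ m' := by omega
        have hb2 : m' ≤ 2 ^ j + 2 ^ (j - 1) - 1 := by omega
        obtain ⟨w, c, c', hwl, hwne, hcc, ⟨i1, h1⟩, ⟨i2, h2⟩⟩ := ih hjpos m' hb1 hb2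
        refine ⟨Iw w, sgm c, sgm c', ?_, ?_, fun h => hcc (sgm_inj h), ?_, ?_⟩
        · rw [Iw_length, hwl]; omega
        · rw [show m' + m' = 2 * m' by ring, R_double]
          exact fun h => hwne (Iw_injective h)
        · exact ⟨2 * i1 + 1, (occB_double h1).1⟩
        · exact ⟨2 * i2 + 1, (occB_double h2).1⟩
      · have hb1 : 2 ^ j ≤ m' := by omega
        have hb2 : m' ≤ 2 ^ j + 2 ^ (j - 1) - 1 := by omega
        obtain ⟨w, c, c', hwl, hwne, hcc, ⟨i1, h1⟩, ⟨i2, h2⟩⟩ := ih hjpos m' hb1 hb2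
        refine ⟨A.x :: Iw w, sgm c, sgm c', ?_, ?_, fun h => hcc (sgm_inj h), ?_, ?_⟩
        · simp only [List.length_cons, Iw_length, hwl]
        · rw [R_double']
          intro h
          simp only [List.cons.injEq, true_and] at h
          exact hwne (Iw_injective h)
        · exact ⟨2 * i1, by simpa using (occB_double h1).2⟩
        · exact ⟨2 * i2, by simpa using (occB_double h2).2⟩

/-! ### transfer to factors of `η` -/

/-- `w` occurs in `η` at position `i`. -/
def occE (w : List A) (i : ℕ) : Prop := ∀ k, k < w.length → w.getD k A.a = eta (i + k)

lemma isFactorEta_of_occE {w : List A} {i : ℕ} (h : occE w i) : IsFactorEta w := by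
  refine ⟨i, ?_⟩
  apply List.ext_getElem (by simp)
  intro k h1 h2
  simp only [List.getElem_map, List.getElem_range]
  rw [← List.getD_eq_getElem w A.a h1]
  exact h k h1

lemma occE_of_isFactorEta {w : List A} (h : IsFactorEta w) : ∃ i, occE w i := by
  obtain ⟨i, hi⟩ := h
  refine ⟨i, fun k hk => ?_⟩
  conv_lhs => rw [hi]
  rw [List.getD_eq_getElem _ _ (by simpa using hk)]
  simp

lemma occE_take {w : List A} {i : ℕ} (h : occE w i) (t : ℕ) : occE (w.take t) i := by
  intro k hk
  have hk' : k < w.length := lt_of_lt_of_le hk (by simp)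
  rw [List.getD_eq_getElem _ _ hk, List.getElem_take, ← List.getD_eq_getElem _ _ hk']
  exact h k hk'

lemma occE_J {u : List A} {i : ℕ} (h : occB u i) :
    occE (J u) (2 * i + 1) ∧ occE (A.a :: J u) (2 * i) := by
  have key : occE (J u) (2 * i + 1) := by
    intro k hk
    have hk' : k < 2 * u.length := by simpa using hk
    rcases Nat.even_or_odd k with ⟨t, rfl⟩ | ⟨t, rfl⟩
    · have ht : t < u.length := by omega
      rw [show t + t = 2 * t by ring, J_getD_even, h t ht,
        show 2 * i + 1 + 2 * t = 2 * (i + t) + 1 by ring]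
      rfl
    · rw [J_getD_odd, show 2 * i + 1 + (2 * t + 1) = 2 * (i + t + 1) by ring, eta_even]
  refine ⟨key, ?_⟩
  intro k hk
  cases k with
  | zero => rw [Nat.add_zero, eta_even]; rfl
  | succ k =>
    rw [List.getD_cons_succ, show 2 * i + (k + 1) = 2 * i + 1 + k by ring]
    exact key k (by simpa using hk)

lemma factor_ext_even {u : List A} {c : A} (h : ∃ i, occB (u ++ [c]) i) :
    IsFactorEta (J u ++ [c]) := by
  obtain ⟨i, hi⟩ := h
  have h1 := (occE_J hi).1
  rw [J_append] at h1
  have h2 : (J u ++ J [c]) = (J u ++ [c]) ++ [A.a] := by simp [J]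
  rw [h2] at h1
  have h3 := occE_take h1 (J u ++ [c]).length
  rw [List.take_left] at h3
  exact isFactorEta_of_occE h3

lemma factor_ext_odd {u : List A} {c : A} (h : ∃ i, occB (u ++ [c]) i) :
    IsFactorEta ((A.a :: J u) ++ [c]) := by
  obtain ⟨i, hi⟩ := h
  have h1 := (occE_J hi).2
  rw [J_append] at h1
  have h2 : (A.a :: (J u ++ J [c])) = ((A.a :: J u) ++ [c]) ++ [A.a] := by simp [J]
  rw [h2] at h1
  have h3 := occE_take h1 ((A.a :: J u) ++ [c]).length
  rw [List.take_left] at h3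
  exact isFactorEta_of_occE h3

lemma isFactorEta_dropLast_ext {w : List A} {c : A} (h : IsFactorEta (w ++ [c])) :
    IsFactorEta w := by
  obtain ⟨i, hi⟩ := occE_of_isFactorEta h
  have := occE_take hi w.length
  rw [List.take_left] at this
  exact isFactorEta_of_occE this

/-! ### the one-step extension map -/

noncomputable def gext (w : List A) : List A :=
  w ++ [eta ((Classical.epsilon fun i => occE w i) + w.length)]

lemma gext_spec {w : List A} (h : IsFactorEta w) :
    ∃ d : A, gext w = w ++ [d] ∧ IsFactorEta (gext w) := by
  refine ⟨_, rfl, ?_⟩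
  have hocc : occE w (Classical.epsilon fun i => occE w i) :=
    Classical.epsilon_spec (occE_of_isFactorEta h)
  apply isFactorEta_of_occE (i := Classical.epsilon fun i => occE w i)
  intro k hk
  simp only [gext, List.length_append, List.length_cons, List.length_nil] at hk ⊢
  rcases Nat.lt_or_ge k w.length with h1 | h1
  · rw [List.getD_append _ _ _ _ h1]
    exact hocc k h1
  · have hk2 : k = w.length := by omega
    subst hk2
    rw [getD_append_right' _ _ _ le_rfl, Nat.sub_self]
    rfl

lemma gext_dropLast (w : List A) : (gext w).dropLast = w :=
  List.dropLast_concat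

lemma gext_length {w : List A} (h : IsFactorEta w) : (gext w).length = w.length + 1 := by
  obtain ⟨d, hd, _⟩ := gext_spec h
  rw [hd]; simp

/-! ### counting -/

lemma F_finite (L : ℕ) : {w : List A | w.length = L ∧ IsFactorEta w}.Finite :=
  (List.finite_length_eq A L).subset (fun _ hw => hw.1)

/-- choose two distinct non-`a` letters avoiding `d` -/
lemma pick_two (d : A) : ∃ l1 l2 : A, l1 ≠ l2 ∧ l1 ≠ d ∧ l2 ≠ d ∧ l1 ≠ A.a ∧ l2 ≠ A.a := by
  cases d
  · exact ⟨A.x, A.y, by simp, by simp, by simp, by simp, by simp⟩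
  · exact ⟨A.y, A.z, by simp, by simp, by simp, by simp, by simp⟩
  · exact ⟨A.x, A.z, by simp, by simp, by simp, by simp, by simp⟩
  · exact ⟨A.x, A.y, by simp, by simp, by simp, by simp, by simp⟩

section counting

variable {L : ℕ}

lemma gext_mem {L : ℕ} {w : List A}
    (hw : w ∈ {w : List A | w.length = L ∧ IsFactorEta w}) :
    gext w ∈ {w : List A | w.length = L + 1 ∧ IsFactorEta w} := by
  obtain ⟨hl, hf⟩ := hw
  obtain ⟨d, hd, hfac⟩ := gext_spec hf
  exact ⟨by rw [gext_length hf, hl], hfac⟩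

lemma gext_injOn {L : ℕ} :
    Set.InjOn gext {w : List A | w.length = L ∧ IsFactorEta w} := by
  intro w hw v hv h
  rw [← gext_dropLast w, ← gext_dropLast v, h]

/-- main counting estimate, `+2` version -/
lemma key2 (L : ℕ) (w1 : List A) (h1 : w1.length = L)
    (hx : IsFactorEta (w1 ++ [A.x])) (hy : IsFactorEta (w1 ++ [A.y]))
    (hz : IsFactorEta (w1 ++ [A.z])) :
    etaComplexity L + 2 ≤ etaComplexity (L + 1) := by
  classical
  set T := {w : List A | w.length = L ∧ IsFactorEta w} with hT
  set S := {w : List A | w.length = L + 1 ∧ IsFactorEta w} with hS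
  have hTfin := F_finite L
  have hSfin := F_finite (L + 1)
  have hw1T : w1 ∈ T := ⟨h1, isFactorEta_dropLast_ext hx⟩
  obtain ⟨d1, hd1, _⟩ := gext_spec hw1T.2
  obtain ⟨l1, l2, hl12, hl1d, hl2d, hl1a, hl2a⟩ := pick_two d1
  have hfac : ∀ l : A, l ≠ A.a → IsFactorEta (w1 ++ [l]) := by
    intro l hl; cases l
    · exact absurd rfl hl
    · exact hx
    · exact hy
    · exact hz
  set U := gext '' T with hU
  have hUfin : U.Finite := hTfin.image _
  have hUS : U ⊆ S := by
    rintro _ ⟨w, hw, rfl⟩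
    exact gext_mem hw
  have hnotmem : ∀ l : A, l ≠ d1 → w1 ++ [l] ∉ U := by
    rintro l hl ⟨w, hw, hgw⟩
    have : w = w1 := by
      rw [← gext_dropLast w, hgw, List.dropLast_concat]
    subst this
    rw [hd1] at hgw
    have hdl : d1 = l := by injection List.append_cancel_left hgw
    exact hl hdl.symm
  have hmemS : ∀ l : A, l ≠ A.a → w1 ++ [l] ∈ S := by
    intro l hl
    exact ⟨by simp [h1], hfac l hl⟩
  have hsub : insert (w1 ++ [l1]) (insert (w1 ++ [l2]) U) ⊆ S := by
    intro w hw
    rcases hw with rfl | rfl | hw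
    · exact hmemS l1 hl1a
    · exact hmemS l2 hl2a
    · exact hUS hw
  have hne12 : w1 ++ [l1] ∉ insert (w1 ++ [l2]) U := by
    intro h
    rcases h with h | h
    · exact hl12 (by injection List.append_cancel_left h)
    · exact hnotmem l1 hl1d h
  have hcard : (insert (w1 ++ [l1]) (insert (w1 ++ [l2]) U)).ncard = U.ncard + 2 := by
    rw [Set.ncard_insert_of_notMem hne12 ((hUfin.insert _)),
      Set.ncard_insert_of_notMem (hnotmem l2 hl2d) hUfin]
  have hUcard : U.ncard = T.ncard := Set.ncard_image_of_injOn gext_injOn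
  have := Set.ncard_le_ncard hsub hSfin
  rw [hcard, hUcard] at this
  simpa [etaComplexity, ← hT, ← hS] using this

/-- main counting estimate, `+3` version -/
lemma key3 (L : ℕ) (w1 w2 : List A) (h1 : w1.length = L) (h2 : w2.length = L)
    (hw12 : w1 ≠ w2)
    (hx : IsFactorEta (w1 ++ [A.x])) (hy : IsFactorEta (w1 ++ [A.y]))
    (hz : IsFactorEta (w1 ++ [A.z]))
    (c c' : A) (hcc : c ≠ c')
    (hc : IsFactorEta (w2 ++ [c])) (hc' : IsFactorEta (w2 ++ [c'])) :
    etaComplexity L + 3 ≤ etaComplexity (L + 1) := by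
  classical
  set T := {w : List A | w.length = L ∧ IsFactorEta w} with hT
  set S := {w : List A | w.length = L + 1 ∧ IsFactorEta w} with hS
  have hTfin := F_finite L
  have hSfin := F_finite (L + 1)
  have hw1T : w1 ∈ T := ⟨h1, isFactorEta_dropLast_ext hx⟩
  have hw2T : w2 ∈ T := ⟨h2, isFactorEta_dropLast_ext hc⟩
  obtain ⟨d1, hd1, _⟩ := gext_spec hw1T.2
  obtain ⟨d2, hd2, _⟩ := gext_spec hw2T.2
  obtain ⟨l1, l2, hl12, hl1d, hl2d, hl1a, hl2a⟩ := pick_two d1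
  have hfac : ∀ l : A, l ≠ A.a → IsFactorEta (w1 ++ [l]) := by
    intro l hl; cases l
    · exact absurd rfl hl
    · exact hx
    · exact hy
    · exact hz
  -- the third extra word, on w2
  obtain ⟨l3, hl3d, hl3fac⟩ : ∃ l3 : A, l3 ≠ d2 ∧ IsFactorEta (w2 ++ [l3]) := by
    by_cases h : c = d2
    · exact ⟨c', fun he => hcc (h ▸ he ▸ rfl), hc'⟩
    · exact ⟨c, h, hc⟩
  set U := gext '' T with hU
  have hUfin : U.Finite := hTfin.image _
  have hUS : U ⊆ S := by
    rintro _ ⟨w, hw, rfl⟩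
    exact gext_mem hw
  have hnotmem : ∀ l : A, l ≠ d1 → w1 ++ [l] ∉ U := by
    rintro l hl ⟨w, hw, hgw⟩
    have : w = w1 := by
      rw [← gext_dropLast w, hgw, List.dropLast_concat]
    subst this
    rw [hd1] at hgw
    have hdl : d1 = l := by injection List.append_cancel_left hgw
    exact hl hdl.symm
  have hnotmem2 : w2 ++ [l3] ∉ U := by
    rintro ⟨w, hw, hgw⟩
    have : w = w2 := by
      rw [← gext_dropLast w, hgw, List.dropLast_concat]
    subst this
    rw [hd2] at hgw
    have hdl : d2 = l3 := by injection List.append_cancel_left hgw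
    exact hl3d hdl.symm
  have hne1 : ∀ l : A, w1 ++ [l] ≠ w2 ++ [l3] := by
    intro l h
    apply hw12
    have := congrArg List.dropLast h
    rwa [List.dropLast_concat, List.dropLast_concat] at this
  have hmemS1 : ∀ l : A, l ≠ A.a → w1 ++ [l] ∈ S := fun l hl =>
    ⟨by simp [h1], hfac l hl⟩
  have hmemS2 : w2 ++ [l3] ∈ S := ⟨by simp [h2], hl3fac⟩
  have hsub : insert (w1 ++ [l1]) (insert (w1 ++ [l2]) (insert (w2 ++ [l3]) U)) ⊆ S := by
    intro w hw
    rcases hw with rfl | rfl | rfl | hw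
    · exact hmemS1 l1 hl1a
    · exact hmemS1 l2 hl2a
    · exact hmemS2
    · exact hUS hw
  have hm3 : w2 ++ [l3] ∉ U := hnotmem2
  have hm2 : w1 ++ [l2] ∉ insert (w2 ++ [l3]) U := by
    intro h
    rcases h with h | h
    · exact hne1 l2 h
    · exact hnotmem l2 hl2d h
  have hm1 : w1 ++ [l1] ∉ insert (w1 ++ [l2]) (insert (w2 ++ [l3]) U) := by
    intro h
    rcases h with h | h | h
    · exact hl12 (by injection List.append_cancel_left h)
    · exact hne1 l1 h
    · exact hnotmem l1 hl1d h
  have hcard :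
      (insert (w1 ++ [l1]) (insert (w1 ++ [l2]) (insert (w2 ++ [l3]) U))).ncard
        = U.ncard + 3 := by
    rw [Set.ncard_insert_of_notMem hm1 (((hUfin.insert _).insert _)),
      Set.ncard_insert_of_notMem hm2 (hUfin.insert _),
      Set.ncard_insert_of_notMem hm3 hUfin]
  have hUcard : U.ncard = T.ncard := Set.ncard_image_of_injOn gext_injOn
  have := Set.ncard_le_ncard hsub hSfin
  rw [hcard, hUcard] at this
  simpa [etaComplexity, ← hT, ← hS] using this

end counting


/-- **Lower bounds on the complexity difference**:
(a) `ℂ(L+1) - ℂ(L) ≥ 2` for every `L ≥ 1`;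
(b) `ℂ(L+1) - ℂ(L) ≥ 3` whenever `2^n ≤ L ≤ 2^n + 2^(n-1) - 1` for some `n ≥ 2`. -/
theorem complexity_difference_lower_bounds :
    (∀ L : ℕ, 1 ≤ L → etaComplexity L + 2 ≤ etaComplexity (L + 1)) ∧
    (∀ n L : ℕ, 2 ≤ n → 2 ^ n ≤ L → L ≤ 2 ^ n + 2 ^ (n - 1) - 1 →
      etaComplexity L + 3 ≤ etaComplexity (L + 1)) := by
  constructor
  · -- part (a)
    intro L _
    rcases Nat.even_or_odd L with ⟨m, rfl⟩ | ⟨m, rfl⟩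
    · exact key2 (m + m) (J (R m)) (by rw [J_length, R_length]; ring)
        (factor_ext_even (claimM m A.x (by simp)))
        (factor_ext_even (claimM m A.y (by simp)))
        (factor_ext_even (claimM m A.z (by simp)))
    · exact key2 (2 * m + 1) (A.a :: J (R m))
        (by rw [List.length_cons, J_length, R_length])
        (factor_ext_odd (claimM m A.x (by simp)))
        (factor_ext_odd (claimM m A.y (by simp)))
        (factor_ext_odd (claimM m A.z (by simp)))
  · -- part (b)
    intro n L hn hlo hhi
    have e1 : 2 ^ n = 2 * 2 ^ (n - 1) := by
      rw [← pow_succ']; congr 1; omega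
    have e2 : 2 ^ (n - 1) = 2 * 2 ^ (n - 1 - 1) := by
      rw [← pow_succ']; congr 1; omega
    have e3 : 1 ≤ 2 ^ (n - 1 - 1) := Nat.one_le_two_pow
    rcases Nat.even_or_odd L with ⟨m, rfl⟩ | ⟨m, rfl⟩
    · have hb1 : 2 ^ (n - 1) ≤ m := by omega
      have hb2 : m ≤ 2 ^ (n - 1) + 2 ^ (n - 1 - 1) - 1 := by omega
      obtain ⟨w, c, c', hwl, hwne, hcc, o1, o2⟩ := secondary (n - 1) (by omega) m hb1 hb2
      exact key3 (m + m) (J (R m)) (J w)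
        (by rw [J_length, R_length]; ring)
        (by rw [J_length, hwl]; ring)
        (fun h => hwne (J_injective h).symm)
        (factor_ext_even (claimM m A.x (by simp)))
        (factor_ext_even (claimM m A.y (by simp)))
        (factor_ext_even (claimM m A.z (by simp)))
        c c' hcc (factor_ext_even o1) (factor_ext_even o2)
    · have hb1 : 2 ^ (n - 1) ≤ m := by omega
      have hb2 : m ≤ 2 ^ (n - 1) + 2 ^ (n - 1 - 1) - 1 := by omega
      obtain ⟨w, c, c', hwl, hwne, hcc, o1, o2⟩ := secondary (n - 1) (by omega) m hb1 hb2
      exact key3 (2 * m + 1) (A.a :: J (R m)) (A.a :: J w)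
        (by rw [List.length_cons, J_length, R_length])
        (by rw [List.length_cons, J_length, hwl])
        (by
          intro h
          simp only [List.cons.injEq, true_and] at h
          exact hwne (J_injective h).symm)
        (factor_ext_odd (claimM m A.x (by simp)))
        (factor_ext_odd (claimM m A.y (by simp)))
        (factor_ext_odd (claimM m A.z (by simp)))
        c c' hcc (factor_ext_odd o1) (factor_ext_odd o2)
end

section
/- The fixed point η is automatic: for every n ∈ ℕ, η(n) equals the label of the state reached in the automaton 𝒜 by starting at q₀ and reading the binary expansion of n from the most significant digit to the least significant digit (for n = 0 one reads the single digit 0; for n ≥ 1 the leading digit is 1). -/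
/-- The transition function of the automaton `𝒜`: the states `q₀,q₁,q₂,q₃` are
identified with their labels `a,x,y,z`. Reading `0` from any state leads to `q₀`;
reading `1` gives `q₀ ↦ q₁ ↦ q₂ ↦ q₃ ↦ q₁`. -/
def delta : A → Bool → A
  | _, false => A.a
  | A.a, true => A.x
  | A.x, true => A.y
  | A.y, true => A.z
  | A.z, true => A.x

def g (n : ℕ) : A := (Nat.bits n).reverse.foldl delta A.a

lemma delta_false (c : A) : delta c false = A.a := by cases c <;> rfl

lemma g_zero : g 0 = A.a := by simp [g]
lemma g_odd (k : ℕ) : g (2*k+1) = delta (g k) true := by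
  simp [g, Nat.bit1_bits, List.foldl_append]
lemma g_even (k : ℕ) : g (2*k) = A.a := by
  cases k with
  | zero => simp [g]
  | succ m => simp [g, Nat.bit0_bits _ (Nat.succ_ne_zero m), List.foldl_append, delta_false]

lemma tau_delta_true (c : A) : tau (delta c true) = [delta (delta c true) true] := by
  cases c <;> rfl

lemma key_s15 (j : ℕ) :
    tauW ((List.range (2*j+1)).map g) = (List.range (4*j+3)).map g := by
  induction j with
  | zero =>
    show tauW [g 0] = (List.range 3).map g
    have h1 : g 1 = A.x := by have := g_odd 0; rw [g_zero] at this; simpa [delta] using this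
    have h2 : g 2 = A.a := g_even 1
    simp [tauW, List.range_succ, g_zero, h1, h2, tau]
  | succ j ih =>
    have e1 : 2*(j+1)+1 = (2*j+1)+2 := by ring
    have e2 : 4*(j+1)+3 = (4*j+3)+4 := by ring
    rw [e1, List.range_add, List.map_append]
    rw [tauW, List.flatMap_append, ← tauW, ih]
    conv_rhs => rw [e2, List.range_add, List.map_append]
    congr 1
    have hodd : g (2*j+1) = delta (g j) true := g_odd j
    have h1 : tau (g (2*j+1)) = [g (4*j+3)] := by
      rw [hodd, tau_delta_true]
      have : 4*j+3 = 2*(2*j+1)+1 := by ring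
      rw [this, g_odd, hodd]
    have h2 : tau (g (2*j+1+1)) = [A.a, A.x, A.a] := by
      have : 2*j+1+1 = 2*(j+1) := by ring
      rw [this, g_even]; rfl
    have h4 : g (4*j+3+1) = A.a := by
      have : 4*j+3+1 = 2*(2*j+2) := by ring
      rw [this, g_even]
    have h5 : g (4*j+3+2) = A.x := by
      have : 4*j+3+2 = 2*(2*j+2)+1 := by ring
      rw [this, g_odd]
      have : 2*j+2 = 2*(j+1) := by ring
      rw [this, g_even]; rfl
    have h6 : g (4*j+3+3) = A.a := by
      have : 4*j+3+3 = 2*(2*j+3) := by ring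
      rw [this, g_even]
    have hr2 : List.range 2 = [0, 1] := rfl
    have hr4 : List.range 4 = [0, 1, 2, 3] := rfl
    rw [hr2, hr4]
    simp only [List.map_cons, List.map_nil, List.flatMap_cons, List.flatMap_nil]
    norm_num [h1, h2, h4, h5, h6]

lemma pw_eq_s15 (m : ℕ) : pw m = (List.range (2^(m+1)-1)).map g := by
  induction m with
  | zero =>
    show [A.a] = [g 0]
    rw [g_zero]
  | succ m ih =>
    have hpow : 1 ≤ 2^(m+1) := Nat.one_le_two_pow
    have e1 : 2^(m+1)-1 = 2*(2^m - 1)+1 := by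
      have : 1 ≤ 2^m := Nat.one_le_two_pow
      rw [pow_succ]; omega
    have e2 : 2^(m+1+1)-1 = 4*(2^m - 1)+3 := by
      have : 1 ≤ 2^m := Nat.one_le_two_pow
      rw [pow_succ, pow_succ]; omega
    show tauW (pw m) = _
    rw [ih, e1, e2, key_s15]

/-- **`η` is automatic**: `η(n)` is the label of the state reached from `q₀` by
reading the binary expansion of `n` from the most significant digit to the least
significant one (`Nat.bits n` lists the digits least-significant-first; for
`n = 0` reading the single digit `0` from `q₀` also yields `q₀`, whose label is `a`). -/
theorem eta_is_automatic : ∀ n : ℕ, eta n = (Nat.bits n).reverse.foldl delta A.a := by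
  intro n
  show eta n = g n
  unfold eta
  rw [pw_eq_s15]
  have hn : n < ((List.range (2^(n+1+1)-1)).map g).length := by
    simp only [List.length_map, List.length_range]
    have : n+1 < 2^(n+1) := Nat.lt_two_pow_self
    have h2 : 2^(n+1) ≤ 2^(n+2) := Nat.pow_le_pow_right (by norm_num) (by omega)
    omega
  rw [List.getD_eq_getElem _ _ hn]
  simp
end
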